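/- Seroussi–Lempel theorem (statement): the field extension F_{q^m}/F_q admits a self-dual basis with respect to the trace form if and only if q is even, or both q and m are odd. -/

import Mathlib

open Finset Module Matrix

section SL

variable {K L : Type} [Field K] [Field L] [Algebra K L]

/-- An orthonormal family w.r.t. the trace form is linearly independent. -/
private lemma sl_li {n : ℕ} (v : Fin n → L)
    (hv : ∀ i j, Algebra.trace K L (v i * v j) = if i = j then 1 else 0) :
    LinearIndependent K v := by
  rw [Fintype.linearIndependent_iff]
  intro g hg j
  have h := congrArg (fun z => Algebra.trace K L (z * v j)) hg
  simp only [Finset.sum_mul, smul_mul_assoc, map_sum, _root_.map_smul, hv, zero_mul, map_zero,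
    smul_eq_mul, mul_ite, mul_one, mul_zero, Finset.sum_ite_eq', Finset.mem_univ, if_true] at h
  exact h

/-- Turn an orthonormal family of the right size into a self-dual basis. -/
private lemma sd_basis [FiniteDimensional K L] {m : ℕ} (hm : 0 < m)
    (hdim : Module.finrank K L = m) (v : Fin m → L)
    (hv : ∀ i j, Algebra.trace K L (v i * v j) = if i = j then 1 else 0) :
    ∃ B : Basis (Fin m) K L,
      ∀ i j, Algebra.trace K L (B i * B j) = if i = j then 1 else 0 := by
  haveI : Nonempty (Fin m) := Fin.pos_iff_nonempty.mp hm
  have hcard : Fintype.card (Fin m) = Module.finrank K L := by simp [hdim]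
  refine ⟨basisOfLinearIndependentOfCardEqFinrank (sl_li v hv) hcard, fun i j => ?_⟩
  rw [coe_basisOfLinearIndependentOfCardEqFinrank]
  exact hv i j

/-- Change of basis for the Gram determinant of the trace form. -/
private lemma sl_gram_det {m : ℕ} (b : Basis (Fin m) K L) (v : Fin m → L) :
    ∃ c : K, Matrix.det (Matrix.of fun i j => Algebra.trace K L (v i * v j)) =
      c ^ 2 * Matrix.det (Matrix.of fun i j => Algebra.trace K L (b i * b j)) := by
  classical
  set G : Matrix (Fin m) (Fin m) K := Matrix.of fun i j => Algebra.trace K L (b i * b j) with hG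
  set P : Matrix (Fin m) (Fin m) K := Matrix.of fun k i => b.repr (v i) k with hPdef
  refine ⟨P.det, ?_⟩
  have key : (Matrix.of fun i j => Algebra.trace K L (v i * v j)) = Pᵀ * G * P := by
    ext i j
    have step : Algebra.trace K L (v i * v j)
        = ∑ k, ∑ l, b.repr (v i) k * (b.repr (v j) l * Algebra.trace K L (b k * b l)) := by
      conv_lhs => rw [← b.sum_repr (v i), ← b.sum_repr (v j)]
      rw [Finset.sum_mul, map_sum]
      refine Finset.sum_congr rfl fun k _ => ?_
      rw [Finset.mul_sum, map_sum]
      refine Finset.sum_congr rfl fun l _ => ?_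
      rw [smul_mul_assoc, mul_smul_comm, _root_.map_smul, _root_.map_smul, smul_eq_mul, smul_eq_mul]
    rw [Matrix.of_apply, step]
    simp only [Matrix.mul_apply, Matrix.transpose_apply, Finset.sum_mul, hPdef, hG,
      Matrix.of_apply]
    rw [Finset.sum_comm]
    exact Finset.sum_congr rfl fun l _ => Finset.sum_congr rfl fun k _ => by ring
  rw [key, Matrix.det_mul, Matrix.det_mul, Matrix.det_transpose]
  ring

/-- Distinct small powers of `q` give distinct power maps on a field with `q ^ m` elements. -/
private lemma sl_powinj [Fintype L] {q m : ℕ} (hq2 : 2 ≤ q)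
    (hcardL : Fintype.card L = q ^ m) {i j : ℕ} (hi : i < m) (hj : j < m)
    (h : ∀ z : L, z ^ q ^ i = z ^ q ^ j) : i = j := by
  classical
  obtain ⟨g, hg⟩ := IsCyclic.exists_generator (α := Lˣ)
  have horder : orderOf g = q ^ m - 1 := by
    rw [orderOf_eq_card_of_forall_mem_zpowers hg, Nat.card_eq_fintype_card, Fintype.card_units, hcardL]
  have hpow : g ^ q ^ i = g ^ q ^ j := by
    apply Units.ext
    rw [Units.val_pow_eq_pow_val, Units.val_pow_eq_pow_val]
    exact h (g : L)
  rw [pow_eq_pow_iff_modEq, horder] at hpow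
  rcases Nat.lt_or_ge m 2 with hm2 | hm2
  · omega
  · have hb : ∀ k, k < m → q ^ k < q ^ m - 1 := by
      intro k hk
      have h1 : q ^ k ≤ q ^ (m - 1) := Nat.pow_le_pow_right (by omega) (by omega)
      have h2 : q ^ (m - 1) * 2 ≤ q ^ (m - 1) * q := Nat.mul_le_mul_left _ hq2
      have h3 : q ^ (m - 1) * q = q ^ m := by rw [← pow_succ]; congr 1; omega
      have h4 : 2 ≤ q ^ (m - 1) := by
        calc 2 ≤ q := hq2
        _ = q ^ 1 := (pow_one q).symm
        _ ≤ q ^ (m - 1) := Nat.pow_le_pow_right (by omega) (by omega)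
      omega
    have heq : q ^ i = q ^ j := Nat.ModEq.eq_of_lt_of_lt hpow (hb i hi) (hb j hj)
    exact Nat.pow_right_injective hq2 heq

/-- The trace of a finite field extension is the sum of `q`-power maps. -/
private noncomputable def slFrob (p e q : ℕ) [Fintype K] [ExpChar L p]
    (hq : q = p ^ e) (hqcard : Fintype.card K = q) (k : ℕ) : L →ₐ[K] L where
  toRingHom := iterateFrobenius L p (e * k)
  commutes' := fun a => by
    have h1 : iterateFrobenius L p (e * k) (algebraMap K L a) = (algebraMap K L a) ^ q ^ k := by
      rw [iterateFrobenius_def, hq, ← pow_mul, mul_comm e k, pow_mul]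
    show iterateFrobenius L p (e * k) (algebraMap K L a) = algebraMap K L a
    rw [h1, ← map_pow]
    congr 1
    rw [← hqcard]
    exact FiniteField.pow_card_pow k a

private lemma slFrob_apply (p e q : ℕ) [Fintype K] [ExpChar L p]
    (hq : q = p ^ e) (hqcard : Fintype.card K = q) (k : ℕ) (z : L) :
    slFrob p e q hq hqcard k z = z ^ q ^ k := by
  have h0 : slFrob (K := K) (L := L) p e q hq hqcard k z = iterateFrobenius L p (e * k) z := rfl
  rw [h0, iterateFrobenius_def, hq, ← pow_mul, mul_comm e k, pow_mul]

private lemma sl_trace [Fintype K] [Fintype L] (p e q m : ℕ) [ExpChar L p] (hp : p.Prime)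
    (he : 0 < e) (hq : q = p ^ e) (hqcard : Fintype.card K = q)
    (hm : Module.finrank K L = m) (x : L) :
    algebraMap K L (Algebra.trace K L x) = ∑ k ∈ Finset.range m, x ^ q ^ k := by
  classical
  haveI : FiniteDimensional K L := Module.Finite.of_finite
  have hq2 : 2 ≤ q := by rw [← hqcard]; exact Fintype.one_lt_card
  have hcardL : Fintype.card L = q ^ m := by rw [← hm, ← hqcard]; exact card_eq_pow_finrank
  set AC := AlgebraicClosure L with hAC
  set τ : Fin m → (L →ₐ[K] AC) :=
    fun k => (IsScalarTower.toAlgHom K L AC).comp (slFrob p e q hq hqcard (k : ℕ)) with hτ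
  have hτval : ∀ (k : Fin m) (z : L), τ k z = algebraMap L AC (z ^ q ^ (k : ℕ)) := by
    intro k z
    rw [hτ]
    simp only [AlgHom.comp_apply, IsScalarTower.coe_toAlgHom']
    rw [slFrob_apply]
  have hτinj : Function.Injective τ := by
    intro i j hij
    apply Fin.ext
    refine sl_powinj hq2 hcardL i.isLt j.isLt fun z => ?_
    have h1 := congrArg (fun f : L →ₐ[K] AC => f z) hij
    simp only [hτval] at h1
    exact (algebraMap L AC).injective h1
  have hbij : Function.Bijective τ :=
    (Fintype.bijective_iff_injective_and_card τ).mpr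
      ⟨hτinj, by rw [Fintype.card_fin, AlgHom.card K L AC, hm]⟩
  have emb := trace_eq_sum_embeddings AC (K := K) (L := L) (x := x)
  have hsb := Fintype.sum_bijective τ hbij
    (fun k : Fin m => algebraMap L AC (x ^ q ^ (k : ℕ))) (fun σ => σ x)
    (fun k => (hτval k x).symm)
  rw [← hsb] at emb
  apply (algebraMap L AC).injective
  have hLKAC : algebraMap L AC (algebraMap K L (Algebra.trace K L x))
      = algebraMap K AC (Algebra.trace K L x) :=
    (IsScalarTower.algebraMap_apply K L AC _).symm
  rw [hLKAC, emb, map_sum]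
  exact Fin.sum_univ_eq_sum_range (fun k => algebraMap L AC (x ^ q ^ k)) m

/-- Fixed points of the `q`-power map lie in the base field. -/
private lemma sl_fixed [Fintype K] [Fintype L] (q : ℕ) (hqcard : Fintype.card K = q)
    {y : L} (hy : y ^ q = y) : ∃ c : K, algebraMap K L c = y := by
  classical
  by_contra hc
  push_neg at hc
  have hq2 : 2 ≤ q := by rw [← hqcard]; exact Fintype.one_lt_card
  set P : Polynomial L := Polynomial.X ^ q - Polynomial.X with hP
  have hdeg : P.natDegree = q := by
    rw [hP]
    compute_degree!
    · rw [if_neg (by omega : ¬(1 = q))]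
      norm_num [Int.subNatNat]
    · omega
  have hP0 : P ≠ 0 := Polynomial.ne_zero_of_natDegree_gt (n := 0) (by omega)
  have hsub : insert y (Finset.univ.image (algebraMap K L)) ⊆ P.roots.toFinset := by
    intro z hz
    rw [Multiset.mem_toFinset, Polynomial.mem_roots hP0]
    rcases Finset.mem_insert.mp hz with rfl | hz
    · simp [hP, Polynomial.IsRoot, hy]
    · obtain ⟨a, _, rfl⟩ := Finset.mem_image.mp hz
      have ha : (algebraMap K L a) ^ q = algebraMap K L a := by
        rw [← map_pow]
        congr 1
        rw [← hqcard]
        exact FiniteField.pow_card a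
      simp [hP, Polynomial.IsRoot, ha]
  have hnotmem : y ∉ Finset.univ.image (algebraMap K L) := by
    intro hmem
    obtain ⟨a, _, ha⟩ := Finset.mem_image.mp hmem
    exact hc a ha
  have hcard1 : (insert y (Finset.univ.image (algebraMap K L))).card = q + 1 := by
    rw [Finset.card_insert_of_notMem hnotmem,
      Finset.card_image_of_injective _ (algebraMap K L).injective, Finset.card_univ, hqcard]
  have hle := Finset.card_le_card hsub
  have h2 := Multiset.toFinset_card_le P.roots
  have h3 := P.card_roots'
  omega

/-- The Gram determinant of a suitable basis is `δ ^ 2` for the Vandermonde `δ`,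
    and `δ` transforms by the sign of the `m`-cycle under Frobenius. -/
private lemma sl_delta [Fintype K] [Fintype L] (p e q m : ℕ) [ExpChar L p] (hp : p.Prime)
    (he : 0 < e) (hq : q = p ^ e) (hqcard : Fintype.card K = q)
    (hm : Module.finrank K L = m) (hm0 : 0 < m) :
    ∃ (b : Basis (Fin m) K L) (δ : L), δ ≠ 0 ∧
      algebraMap K L
          (Matrix.det (Matrix.of fun i j => Algebra.trace K L (b i * b j))) = δ ^ 2 ∧
      δ ^ q = (-1 : L) ^ (m - 1) * δ := by
  classical
  haveI : FiniteDimensional K L := Module.Finite.of_finite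
  obtain ⟨n, rfl⟩ : ∃ n, m = n + 1 := ⟨m - 1, by omega⟩
  set m := n + 1 with hmdef
  have hq2 : 2 ≤ q := by rw [← hqcard]; exact Fintype.one_lt_card
  have hcardL : Fintype.card L = q ^ m := by rw [← hm, ← hqcard]; exact card_eq_pow_finrank
  set pb : PowerBasis K L := Field.powerBasisOfFiniteOfSeparable K L with hpb
  have hdim : pb.dim = m := by rw [← PowerBasis.finrank pb, hm]
  set b : Basis (Fin m) K L := pb.basis.reindex (finCongr hdim) with hb
  set α := pb.gen with hα
  have hbi : ∀ i : Fin m, b i = α ^ (i : ℕ) := by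
    intro i
    rw [hb, Basis.reindex_apply, PowerBasis.coe_basis]
    congr 1
  set xs : Fin m → L := fun k => α ^ q ^ (k : ℕ) with hxs
  have hxsinj : Function.Injective xs := by
    intro i j hij
    apply Fin.ext
    refine sl_powinj hq2 hcardL i.isLt j.isLt fun z => ?_
    have hfg : slFrob (K := K) (L := L) p e q hq hqcard (i : ℕ) = slFrob (K := K) (L := L) p e q hq hqcard (j : ℕ) := by
      refine PowerBasis.algHom_ext pb ?_
      rw [slFrob_apply, slFrob_apply]
      exact hij
    have h1 := congrArg (fun f : L →ₐ[K] L => f z) hfg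
    simpa only [slFrob_apply] using h1
  set δ : L := (Matrix.vandermonde xs).det with hδ
  have hδ0 : δ ≠ 0 := by
    rw [hδ]
    exact Matrix.det_vandermonde_ne_zero_iff.mpr hxsinj
  have htr := sl_trace p e q m hp he hq hqcard hm
  set G : Matrix (Fin m) (Fin m) K := Matrix.of fun i j => Algebra.trace K L (b i * b j) with hG
  have hmap : G.map (algebraMap K L) = (Matrix.vandermonde xs)ᵀ * Matrix.vandermonde xs := by
    ext i j
    rw [Matrix.map_apply, Matrix.mul_apply, hG, Matrix.of_apply, htr,
      ← Fin.sum_univ_eq_sum_range]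
    refine Finset.sum_congr rfl fun k _ => ?_
    rw [Matrix.transpose_apply, Matrix.vandermonde_apply, Matrix.vandermonde_apply,
      hbi i, hbi j, hxs, mul_pow]
    rw [← pow_mul, ← pow_mul, ← pow_mul, ← pow_mul]
    rw [mul_comm ((i : ℕ)) (q ^ (k : ℕ)), mul_comm ((j : ℕ)) (q ^ (k : ℕ))]
  have hdet : algebraMap K L G.det = δ ^ 2 := by
    rw [RingHom.map_det, RingHom.mapMatrix_apply, hmap, Matrix.det_mul, Matrix.det_transpose, ← hδ, sq]
  set ψ : L →+* L := iterateFrobenius L p e with hψdef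
  have hψ : ∀ z : L, ψ z = z ^ q := fun z => by
    rw [hψdef, iterateFrobenius_def, hq]
  have hcycle : ∀ k : Fin m, ψ (xs k) = xs (finRotate m k) := by
    intro k
    simp only [hψ, hxs, finRotate_succ_apply]
    rw [show (finRotate m) k = k + 1 from finRotate_succ_apply k]
    rw [← pow_mul, ← pow_succ]
    have hval := Fin.val_add_one k
    by_cases hk : k = Fin.last n
    · rw [hval, if_pos hk, pow_zero, pow_one]
      have h1 : (k : ℕ) + 1 = m := by rw [hk, Fin.val_last]
      rw [h1, ← hcardL]
      exact FiniteField.pow_card α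
    · rw [hval, if_neg hk]
  have hσδ : ψ δ = (-1 : L) ^ n * δ := by
    have h1 : (Matrix.vandermonde xs).map ψ
        = Matrix.vandermonde (fun k => xs (finRotate m k)) := by
      ext i j
      rw [Matrix.map_apply, Matrix.vandermonde_apply, Matrix.vandermonde_apply,
        map_pow, hcycle]
    have h2 : Matrix.vandermonde (fun k => xs (finRotate m k))
        = (Matrix.vandermonde xs).submatrix (finRotate m) id := by
      ext i j
      rw [Matrix.vandermonde_apply, Matrix.submatrix_apply, Matrix.vandermonde_apply, id]
    rw [hδ, RingHom.map_det, RingHom.mapMatrix_apply, h1, h2, Matrix.det_permute, sign_finRotate]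
    push_cast [Units.val_pow_eq_pow_val]
    rw [show m - 1 = n from rfl]
  refine ⟨b, δ, hδ0, hdet, ?_⟩
  rw [← hψ, hσδ]
  rw [show m - 1 = n from rfl]

/-- Binary quadratic forms over a finite field of odd characteristic represent 1. -/
private lemma sl_rep [Fintype K] (hodd : Fintype.card K % 2 = 1) {a b : K}
    (ha : a ≠ 0) (hb : b ≠ 0) : ∃ x y : K, a * x ^ 2 + b * y ^ 2 = 1 := by
  classical
  have hdf : (Polynomial.C a * Polynomial.X ^ 2 : Polynomial K).degree = 2 :=
    Polynomial.degree_C_mul_X_pow 2 ha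
  have hdg : (Polynomial.C b * Polynomial.X ^ 2 - Polynomial.C 1 : Polynomial K).degree = 2 := by
    rw [Polynomial.degree_sub_eq_left_of_degree_lt]
    · exact Polynomial.degree_C_mul_X_pow 2 hb
    · rw [Polynomial.degree_C_mul_X_pow 2 hb]
      exact lt_of_le_of_lt Polynomial.degree_C_le (by norm_num)
  obtain ⟨x, y, hxy⟩ := FiniteField.exists_root_sum_quadratic hdf hdg hodd
  refine ⟨x, y, ?_⟩
  simp only [Polynomial.eval_add, Polynomial.eval_sub, Polynomial.eval_mul, Polynomial.eval_pow,
    Polynomial.eval_C, Polynomial.eval_X] at hxy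
  linear_combination hxy

/-- From an orthogonal family with square discriminant, get an orthonormal family. -/
private lemma sl_odd_family [Fintype K] (hodd : Fintype.card K % 2 = 1) :
    ∀ (n : ℕ) (v : Fin (n + 1) → L) (d : Fin (n + 1) → K),
      (∀ i, Algebra.trace K L (v i * v i) = d i) →
      (∀ i j, i ≠ j → Algebra.trace K L (v i * v j) = 0) →
      (∀ i, d i ≠ 0) → IsSquare (∏ i, d i) →
      ∃ w : Fin (n + 1) → L, (∀ i, w i ∈ Submodule.span K (Set.range v)) ∧
        (∀ i j, Algebra.trace K L (w i * w j) = if i = j then 1 else 0) := by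
  intro n
  induction n with
  | zero =>
    intro v d hd horth hne hsq
    obtain ⟨c, hc⟩ := hsq
    have hprod : d 0 = c * c := by rw [← Fin.prod_univ_one d, hc]
    have hc0 : c ≠ 0 := by
      intro h
      rw [h, mul_zero] at hprod
      exact hne 0 hprod
    refine ⟨fun _ => c⁻¹ • v 0,
      fun i => Submodule.smul_mem _ _ (Submodule.subset_span ⟨0, rfl⟩), fun i j => ?_⟩
    have hij : i = j := by
      apply Fin.ext
      have hi := i.isLt
      have hj := j.isLt
      omega
    subst hij
    rw [if_pos rfl, smul_mul_smul_comm, _root_.map_smul, smul_eq_mul, hd 0, hprod]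
    field_simp
  | succ n ih =>
    intro v d hd horth hne hsq
    obtain ⟨x, y, hxy⟩ := sl_rep hodd (hne 0) (hne 1)
    have expand1 : ∀ (a b : K) (i j k : Fin (n + 2)),
        Algebra.trace K L ((a • v i + b • v j) * v k) =
          a * Algebra.trace K L (v i * v k) + b * Algebra.trace K L (v j * v k) := by
      intro a b i j k
      simp only [add_mul, map_add, smul_mul_assoc, _root_.map_smul, smul_eq_mul]
    have expand : ∀ (a b c e : K) (i j k l : Fin (n + 2)),
        Algebra.trace K L ((a • v i + b • v j) * (c • v k + e • v l)) =
          a * c * Algebra.trace K L (v i * v k) + a * e * Algebra.trace K L (v i * v l) +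
          b * c * Algebra.trace K L (v j * v k) + b * e * Algebra.trace K L (v j * v l) := by
      intro a b c e i j k l
      simp only [add_mul, mul_add, map_add, smul_mul_smul_comm, _root_.map_smul, smul_eq_mul]
      ring
    set u : L := x • v 0 + y • v 1 with hu
    set u' : L := (d 1 * y) • v 0 + (-(d 0 * x)) • v 1 with hu'
    have h01 : (0 : Fin (n + 2)) ≠ 1 := by simp [Fin.ext_iff]
    have tuu : Algebra.trace K L (u * u) = 1 := by
      rw [hu, expand, hd 0, hd 1, horth 0 1 h01, horth 1 0 (Ne.symm h01)]
      linear_combination hxy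
    have tuu' : Algebra.trace K L (u * u') = 0 := by
      rw [hu, hu', expand, hd 0, hd 1, horth 0 1 h01, horth 1 0 (Ne.symm h01)]
      ring
    have tu'u' : Algebra.trace K L (u' * u') = d 0 * d 1 := by
      rw [hu', expand, hd 0, hd 1, horth 0 1 h01, horth 1 0 (Ne.symm h01)]
      linear_combination (d 0 * d 1) * hxy
    -- the reduced family
    set vt : Fin (n + 1) → L := Fin.cons u' (fun i : Fin n => v i.succ.succ) with hvt
    set dt : Fin (n + 1) → K := Fin.cons (d 0 * d 1) (fun i : Fin n => d i.succ.succ) with hdt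
    have hne2 : ∀ (i : Fin n), (i.succ.succ : Fin (n + 2)) ≠ 0 :=
      fun i => Fin.succ_ne_zero _
    have hne1 : ∀ (i : Fin n), (i.succ.succ : Fin (n + 2)) ≠ 1 := by
      intro i h
      have hval := congrArg Fin.val h
      simp only [Fin.val_succ, Fin.val_one] at hval
      omega
    have hdt' : ∀ i, Algebra.trace K L (vt i * vt i) = dt i := by
      intro i
      induction i using Fin.cases with
      | zero => simpa [hvt, hdt] using tu'u'
      | succ i => simpa [hvt, hdt] using hd i.succ.succ
    have hortht : ∀ i j, i ≠ j → Algebra.trace K L (vt i * vt j) = 0 := by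
      intro i j hij
      induction i using Fin.cases with
      | zero =>
        induction j using Fin.cases with
        | zero => exact absurd rfl hij
        | succ j =>
          simp only [hvt, Fin.cons_zero, Fin.cons_succ, hu']
          rw [expand1, horth 0 _ (Ne.symm (hne2 j)), horth 1 _ (Ne.symm (hne1 j))]
          ring
      | succ i =>
        induction j using Fin.cases with
        | zero =>
          simp only [hvt, Fin.cons_zero, Fin.cons_succ, hu']
          rw [mul_comm, expand1, horth 0 _ (Ne.symm (hne2 i)), horth 1 _ (Ne.symm (hne1 i))]
          ring
        | succ j =>
          simp only [hvt, Fin.cons_succ]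
          refine horth _ _ fun hc => hij ?_
          rw [Fin.succ_injective _ (Fin.succ_injective _ hc)]
    have hnet : ∀ i, dt i ≠ 0 := by
      intro i
      induction i using Fin.cases with
      | zero => simpa [hdt] using mul_ne_zero (hne 0) (hne 1)
      | succ i => simpa [hdt] using hne i.succ.succ
    have hsqt : IsSquare (∏ i, dt i) := by
      have : (∏ i, dt i) = ∏ i, d i := by
        rw [Fin.prod_univ_succ, Fin.prod_univ_succ, Fin.prod_univ_succ]
        simp only [hdt, Fin.cons_zero, Fin.cons_succ, Fin.succ_zero_eq_one]
        ring
      rwa [this]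
    obtain ⟨wt, hwtspan, hwtorth⟩ := ih vt dt hdt' hortht hnet hsqt
    -- u is orthogonal to everything in the span of vt
    have huspan : ∀ z ∈ Submodule.span K (Set.range vt), Algebra.trace K L (u * z) = 0 := by
      intro z hz
      induction hz using Submodule.span_induction with
      | mem z hzmem =>
        obtain ⟨i, rfl⟩ := hzmem
        induction i using Fin.cases with
        | zero => simpa [hvt] using tuu'
        | succ i =>
          simp only [hvt, Fin.cons_succ, hu]
          rw [expand1, horth 0 _ (Ne.symm (hne2 i)), horth 1 _ (Ne.symm (hne1 i))]
          ring
      | zero => simp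
      | add a b _ _ ha hb => rw [mul_add, map_add, ha, hb, add_zero]
      | smul c a _ ha => rw [mul_smul_comm, _root_.map_smul, ha, smul_zero]
    have hsub : Submodule.span K (Set.range vt) ≤ Submodule.span K (Set.range v) := by
      rw [Submodule.span_le]
      rintro z ⟨i, rfl⟩
      induction i using Fin.cases with
      | zero =>
        simp only [hvt, Fin.cons_zero, hu']
        exact Submodule.add_mem _
          (Submodule.smul_mem _ _ (Submodule.subset_span ⟨0, rfl⟩))
          (Submodule.smul_mem _ _ (Submodule.subset_span ⟨1, rfl⟩))
      | succ i =>
        simp only [hvt, Fin.cons_succ]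
        exact Submodule.subset_span ⟨i.succ.succ, rfl⟩
    refine ⟨Fin.cons u wt, ?_, ?_⟩
    · intro i
      induction i using Fin.cases with
      | zero =>
        simp only [Fin.cons_zero, hu]
        exact Submodule.add_mem _
          (Submodule.smul_mem _ _ (Submodule.subset_span ⟨0, rfl⟩))
          (Submodule.smul_mem _ _ (Submodule.subset_span ⟨1, rfl⟩))
      | succ i =>
        simp only [Fin.cons_succ]
        exact hsub (hwtspan i)
    · intro i j
      induction i using Fin.cases with
      | zero =>
        induction j using Fin.cases with
        | zero => simpa using tuu
        | succ j =>
          simp only [Fin.cons_zero, Fin.cons_succ]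
          rw [if_neg (Ne.symm (Fin.succ_ne_zero j))]
          · exact huspan _ (hwtspan j)
      | succ i =>
        induction j using Fin.cases with
        | zero =>
          simp only [Fin.cons_zero, Fin.cons_succ]
          rw [if_neg (Fin.succ_ne_zero i)]
          rw [mul_comm]
          exact huspan _ (hwtspan i)
        | succ j =>
          simp only [Fin.cons_succ]
          rw [hwtorth i j]
          by_cases hij : i = j
          · subst hij; simp
          · rw [if_neg hij, if_neg (fun h => hij (Fin.succ_injective _ h))]

/-- Codimension-one bound for kernels of functionals intersected with a submodule. -/
private lemma sl_ker_codim [FiniteDimensional K L] (W : Submodule K L) (f : L →ₗ[K] K) :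
    Module.finrank K W ≤ Module.finrank K ↥(W ⊓ LinearMap.ker f) + 1 := by
  classical
  set g : ↥W →ₗ[K] K := f.comp W.subtype with hg
  have h1 : Module.finrank K (LinearMap.range g) + Module.finrank K (LinearMap.ker g)
      = Module.finrank K W := LinearMap.finrank_range_add_finrank_ker g
  have h2 : Module.finrank K (LinearMap.range g) ≤ 1 := by
    have := Submodule.finrank_le (LinearMap.range g)
    simpa [Module.finrank_self] using this
  have h3 : Module.finrank K (LinearMap.ker g) = Module.finrank K ↥(W ⊓ LinearMap.ker f) := by
    have hmap : (LinearMap.ker g).map W.subtype = W ⊓ LinearMap.ker f := by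
      rw [hg, LinearMap.ker_comp, Submodule.map_comap_subtype]
    rw [← hmap, Submodule.finrank_map_subtype_eq]
  omega

/-- Choice of a pivot vector in the characteristic 2 case. -/
private lemma sl_char2_choice [FiniteDimensional K L] (W : Submodule K L)
    (hrk : 2 ≤ Module.finrank K W)
    (hnd : ∀ x ∈ W, (∀ y ∈ W, Algebra.trace K L (x * y) = 0) → x = 0)
    (hex : ∃ x ∈ W, Algebra.trace K L x ≠ 0) :
    ∃ u ∈ W, Algebra.trace K L u = 1 ∧
      ∃ z ∈ W, Algebra.trace K L (u * z) = 0 ∧ Algebra.trace K L z ≠ 0 := by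
  classical
  obtain ⟨x0, hx0W, hx0⟩ := hex
  set w0 : L := (Algebra.trace K L x0)⁻¹ • x0 with hw0def
  have hw0W : w0 ∈ W := Submodule.smul_mem _ _ hx0W
  have hw0 : Algebra.trace K L w0 = 1 := by
    rw [hw0def, _root_.map_smul, smul_eq_mul, inv_mul_cancel₀ hx0]
  by_contra hcon
  push_neg at hcon
  set B : Submodule K L := W ⊓ LinearMap.ker (Algebra.trace K L) with hB
  have hBlt : B < W := lt_of_le_of_ne inf_le_left (by
    intro hEq
    have hw0B : w0 ∈ B := by rw [hEq]; exact hw0W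
    have : Algebra.trace K L w0 = 0 := LinearMap.mem_ker.mp hw0B.2
    rw [hw0] at this
    exact one_ne_zero this)
  have hBrank : Module.finrank K W ≤ Module.finrank K B + 1 := sl_ker_codim W _
  have hBrank2 : Module.finrank K B < Module.finrank K W :=
    Submodule.finrank_lt_finrank_of_lt hBlt
  have hBpos : 0 < Module.finrank K B := by omega
  haveI : Nontrivial ↥B := Module.finrank_pos_iff.mp hBpos
  obtain ⟨yb, hyb⟩ := exists_ne (0 : ↥B)
  set y : L := (yb : L) with hydef
  have hyW : y ∈ W := yb.2.1
  have hyker : y ∈ LinearMap.ker (Algebra.trace K L) := yb.2.2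
  have hy0 : y ≠ 0 := fun h => hyb (Subtype.ext h)
  have h1 : ∀ u ∈ W, Algebra.trace K L u ≠ 0 → Algebra.trace K L (u * y) = 0 := by
    intro u huW hTru
    set u1 : L := (Algebra.trace K L u)⁻¹ • u with hu1def
    have hu1W : u1 ∈ W := Submodule.smul_mem _ _ huW
    have hu1 : Algebra.trace K L u1 = 1 := by
      rw [hu1def, _root_.map_smul, smul_eq_mul, inv_mul_cancel₀ hTru]
    set A : Submodule K L := W ⊓ LinearMap.ker ((Algebra.traceForm K L) u1) with hA
    have hAB : A ≤ B := by
      rintro z hz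
      obtain ⟨hzW, hzk⟩ := hz
      refine ⟨hzW, LinearMap.mem_ker.mpr ?_⟩
      refine hcon u1 hu1W hu1 z hzW ?_
      simpa [Algebra.traceForm_apply] using hzk
    have hArank : Module.finrank K W ≤ Module.finrank K A + 1 :=
      sl_ker_codim W ((Algebra.traceForm K L) u1)
    have hABeq : A = B := Submodule.eq_of_le_of_finrank_le hAB (by omega)
    have hyA : y ∈ A := by
      rw [hABeq]
      exact ⟨hyW, hyker⟩
    have hu1y : Algebra.trace K L (u1 * y) = 0 := by
      have := hyA.2
      simpa [Algebra.traceForm_apply] using this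
    have huu : u = (Algebra.trace K L u) • u1 := by
      rw [hu1def, smul_smul, mul_inv_cancel₀ hTru, one_smul]
    calc Algebra.trace K L (u * y)
        = Algebra.trace K L ((Algebra.trace K L u) • (u1 * y)) := by rw [← smul_mul_assoc, ← huu]
      _ = (Algebra.trace K L u) * Algebra.trace K L (u1 * y) := by
          rw [_root_.map_smul, smul_eq_mul]
      _ = 0 := by rw [hu1y, mul_zero]
  have hkey : ∀ u ∈ W, Algebra.trace K L (u * y) = 0 := by
    intro u huW
    by_cases hTru : Algebra.trace K L u = 0
    · have h2 := h1 (u + w0) (Submodule.add_mem _ huW hw0W)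
        (by rw [map_add, hTru, hw0, zero_add]; exact one_ne_zero)
      have h3 := h1 w0 hw0W (by rw [hw0]; exact one_ne_zero)
      have h4 : Algebra.trace K L ((u + w0) * y)
          = Algebra.trace K L (u * y) + Algebra.trace K L (w0 * y) := by
        rw [add_mul, map_add]
      rw [h2, h3, add_zero] at h4
      exact h4.symm
    · exact h1 u huW hTru
  have : y = 0 := hnd y hyW (fun z hz => by rw [mul_comm]; exact hkey z hz)
  exact hy0 this

/-- Characteristic 2: recursive construction of an orthonormal family. -/
private lemma sl_char2_family [FiniteDimensional K L]
    (h2 : ∀ x : L, Algebra.trace K L (x * x) = Algebra.trace K L x * Algebra.trace K L x) :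
    ∀ (n : ℕ) (W : Submodule K L), Module.finrank K W = n →
      (∀ x ∈ W, (∀ y ∈ W, Algebra.trace K L (x * y) = 0) → x = 0) →
      (n ≠ 0 → ∃ x ∈ W, Algebra.trace K L x ≠ 0) →
      ∃ w : Fin n → L, (∀ i, w i ∈ W) ∧
        (∀ i j, Algebra.trace K L (w i * w j) = if i = j then 1 else 0) := by
  intro n
  induction n with
  | zero =>
    intro W _ _ _
    exact ⟨fun i => i.elim0, fun i => i.elim0, fun i => i.elim0⟩
  | succ n ih =>
    intro W hrk hnd hex
    obtain ⟨x0, hx0W, hx0⟩ := hex (Nat.succ_ne_zero n)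
    rcases Nat.eq_zero_or_pos n with rfl | hn
    · set u : L := (Algebra.trace K L x0)⁻¹ • x0 with hudef
      have huW : u ∈ W := Submodule.smul_mem _ _ hx0W
      have hTru : Algebra.trace K L u = 1 := by
        rw [hudef, _root_.map_smul, smul_eq_mul, inv_mul_cancel₀ hx0]
      refine ⟨fun _ => u, fun _ => huW, fun i j => ?_⟩
      have hij : i = j := by
        apply Fin.ext
        have hi := i.isLt
        have hj := j.isLt
        omega
      subst hij
      rw [if_pos rfl, h2 u, hTru, one_mul]
    · obtain ⟨u, huW, hTru, z, hzW, hz1, hz2⟩ := sl_char2_choice W (by omega) hnd ⟨x0, hx0W, hx0⟩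
      have huu : Algebra.trace K L (u * u) = 1 := by rw [h2, hTru, one_mul]
      have hu0 : u ≠ 0 := by
        intro h
        rw [h, map_zero] at hTru
        exact one_ne_zero hTru.symm
      set W' : Submodule K L := W ⊓ LinearMap.ker ((Algebra.traceForm K L) u) with hW'
      have hW'le : W' ≤ W := inf_le_left
      have hW'ker : ∀ x ∈ W', Algebra.trace K L (u * x) = 0 := by
        intro x hx
        have := hx.2
        simpa [Algebra.traceForm_apply] using this
      have hdec : ∀ x ∈ W, x - (Algebra.trace K L (u * x)) • u ∈ W' := by
        intro x hx
        refine ⟨Submodule.sub_mem _ hx (Submodule.smul_mem _ _ huW), LinearMap.mem_ker.mpr ?_⟩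
        rw [Algebra.traceForm_apply, mul_sub, map_sub, mul_smul_comm, _root_.map_smul,
          smul_eq_mul, huu, mul_one, sub_self]
      have hspanle : Submodule.span K {u} ≤ W := by
        rw [Submodule.span_le, Set.singleton_subset_iff]
        exact huW
      have hsup : W' ⊔ Submodule.span K {u} = W := by
        apply le_antisymm (sup_le hW'le hspanle)
        intro x hx
        rw [Submodule.mem_sup]
        exact ⟨x - (Algebra.trace K L (u * x)) • u, hdec x hx,
          (Algebra.trace K L (u * x)) • u,
          Submodule.smul_mem _ _ (Submodule.mem_span_singleton_self u), by ring⟩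
      have hdisj : W' ⊓ Submodule.span K {u} = ⊥ := by
        rw [Submodule.eq_bot_iff]
        rintro x ⟨hx1, hx2⟩
        obtain ⟨c, rfl⟩ := Submodule.mem_span_singleton.mp hx2
        have := hW'ker _ hx1
        rw [mul_smul_comm, _root_.map_smul, smul_eq_mul, huu, mul_one] at this
        rw [this, zero_smul]
      have hrank' : Module.finrank K W' = n := by
        have := Submodule.finrank_sup_add_finrank_inf_eq W' (Submodule.span K {u})
        rw [hsup, hdisj, finrank_bot, finrank_span_singleton hu0, hrk] at this
        omega
      have hnd' : ∀ x ∈ W', (∀ y ∈ W', Algebra.trace K L (x * y) = 0) → x = 0 := by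
        intro x hxW' hall
        refine hnd x (hW'le hxW') fun y hyW => ?_
        have hdecy := hdec y hyW
        have hxy' := hall _ hdecy
        have hxu : Algebra.trace K L (x * u) = 0 := by
          rw [mul_comm]
          exact hW'ker x hxW'
        rw [mul_sub, map_sub, mul_smul_comm, _root_.map_smul, smul_eq_mul, hxu, mul_zero,
          sub_zero] at hxy'
        exact hxy'
      have hex' : n ≠ 0 → ∃ x ∈ W', Algebra.trace K L x ≠ 0 := by
        intro _
        exact ⟨z, ⟨hzW, LinearMap.mem_ker.mpr (by simpa [Algebra.traceForm_apply] using hz1)⟩, hz2⟩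
      obtain ⟨w', hw'W, hw'orth⟩ := ih W' hrank' hnd' hex'
      refine ⟨Fin.cons u w', ?_, ?_⟩
      · intro i
        induction i using Fin.cases with
        | zero => simpa using huW
        | succ i => simpa using hW'le (hw'W i)
      · intro i j
        induction i using Fin.cases with
        | zero =>
          induction j using Fin.cases with
          | zero => simpa using huu
          | succ j =>
            simp only [Fin.cons_zero, Fin.cons_succ]
            rw [if_neg (Ne.symm (Fin.succ_ne_zero j))]
            exact hW'ker _ (hw'W j)
        | succ i =>
          induction j using Fin.cases with
          | zero =>
            simp only [Fin.cons_zero, Fin.cons_succ]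
            rw [if_neg (Fin.succ_ne_zero i), mul_comm]
            exact hW'ker _ (hw'W i)
          | succ j =>
            simp only [Fin.cons_succ]
            rw [hw'orth i j]
            by_cases hij : i = j
            · subst hij; simp
            · rw [if_neg hij, if_neg (fun h => hij (Fin.succ_injective _ h))]

end SL

/-- Seroussi–Lempel: `F_{q^m}/F_q` admits a self-dual basis with
respect to the trace form if and only if `q` is even, or both `q` and `m` are
odd. -/
theorem stmt15 (p e q m : ℕ) (hp : p.Prime) (he : 0 < e) (hq : q = p ^ e) (hm : 0 < m)
    (K L : Type) [Field K] [Field L] [Fintype K] [Fintype L] [Algebra K L]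
    (hcard : Fintype.card K = q) (hdim : Module.finrank K L = m) :
    (∃ B : Basis (Fin m) K L,
        ∀ i j, Algebra.trace K L (B i * B j) = if i = j then 1 else 0) ↔
      (Even q ∨ (Odd q ∧ Odd m)) := by
  classical
  haveI : FiniteDimensional K L := Module.Finite.of_finite
  have hq2 : 2 ≤ q := by rw [← hcard]; exact Fintype.one_lt_card
  -- characteristic bookkeeping
  haveI := ringChar.charP K
  obtain ⟨nn, hrp, hcardr⟩ := FiniteField.card K (ringChar K)
  have hpr : ringChar K = p := by
    have h1 : p ∣ (ringChar K) ^ (nn : ℕ) := by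
      rw [← hcardr, hcard, hq]
      exact dvd_pow_self p (by omega)
    have h2 : p ∣ ringChar K := Nat.Prime.dvd_of_dvd_pow hp h1
    exact ((Nat.prime_dvd_prime_iff_eq hp hrp).mp h2).symm
  haveI hKp : CharP K p := hpr ▸ ringChar.charP K
  haveI hLp : CharP L p := charP_of_injective_algebraMap (algebraMap K L).injective p
  haveI hLe : ExpChar L p := ExpChar.prime hp
  have hcardL : Fintype.card L = q ^ m := by rw [← hdim, ← hcard]; exact card_eq_pow_finrank
  have htr : ∀ x : L, algebraMap K L (Algebra.trace K L x) = ∑ k ∈ Finset.range m, x ^ q ^ k :=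
    sl_trace p e q m hp he hq hcard hdim
  obtain ⟨b, δ, hδ0, hδdet, hδq⟩ := sl_delta p e q m hp he hq hcard hdim hm
  set G : Matrix (Fin m) (Fin m) K := Matrix.of fun i j => Algebra.trace K L (b i * b j) with hG
  have hqpar : Even q ↔ p = 2 := by
    rw [hq]
    constructor
    · intro hEq
      have h2 : 2 ∣ p ^ e := hEq.two_dvd
      exact ((Nat.prime_dvd_prime_iff_eq Nat.prime_two hp).mp
        (Nat.Prime.dvd_of_dvd_pow Nat.prime_two h2)).symm
    · rintro rfl
      exact Nat.even_pow.mpr ⟨even_two, by omega⟩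
  constructor
  · rintro ⟨B, hB⟩
    by_cases hqe : Even q
    · exact Or.inl hqe
    · refine Or.inr ⟨Nat.not_even_iff_odd.mp hqe, ?_⟩
      by_contra hmo
      have hme : Even m := Nat.not_odd_iff_even.mp hmo
      obtain ⟨c, hc⟩ := sl_gram_det b ⇑B
      have hBGram : (Matrix.of fun i j => Algebra.trace K L (B i * B j))
          = (1 : Matrix (Fin m) (Fin m) K) := by
        ext i j
        rw [Matrix.of_apply, hB i j, Matrix.one_apply]
      rw [hBGram, Matrix.det_one] at hc
      have hc0 : c ≠ 0 := by
        intro h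
        rw [h] at hc
        norm_num at hc
      have hdetsq : Matrix.det G = (c⁻¹) ^ 2 := by
        field_simp
        linear_combination -hc
      have h1 : (algebraMap K L (c⁻¹)) ^ 2 = δ ^ 2 := by
        rw [← map_pow, ← hdetsq, hδdet]
      have h2 : (δ - algebraMap K L c⁻¹) * (δ + algebraMap K L c⁻¹) = 0 := by
        linear_combination -h1
      have hδfix : δ ^ q = δ := by
        have hpowc : (c⁻¹ : K) ^ q = c⁻¹ := by rw [← hcard]; exact FiniteField.pow_card _
        rcases mul_eq_zero.mp h2 with h3 | h3
        · have h4 : δ = algebraMap K L c⁻¹ := by linear_combination h3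
          rw [h4, ← map_pow, hpowc]
        · have h4 : δ = - algebraMap K L c⁻¹ := by linear_combination h3
          have hqodd : Odd q := Nat.not_even_iff_odd.mp hqe
          rw [h4, hqodd.neg_pow, ← map_pow, hpowc]
      have hm1odd : Odd (m - 1) := Nat.Even.sub_odd hm hme odd_one
      have h5 : (-1 : L) ^ (m - 1) * δ = δ := by rw [← hδq, hδfix]
      rw [hm1odd.neg_one_pow, neg_one_mul] at h5
      have h6 : (2 : L) * δ = 0 := by linear_combination -h5
      have hp2 : p ≠ 2 := fun h => hqe (hqpar.mpr h)
      have h2ne : (2 : L) ≠ 0 := by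
        intro h
        have h2' : ((2 : ℕ) : L) = 0 := by exact_mod_cast h
        have hdvd := (CharP.cast_eq_zero_iff L p 2).mp h2'
        exact hp2 ((Nat.prime_dvd_prime_iff_eq hp Nat.prime_two).mp hdvd)
      rcases mul_eq_zero.mp h6 with h | h
      · exact h2ne h
      · exact hδ0 h
  · rintro (hqe | ⟨hqo, hmo⟩)
    · -- characteristic 2
      have hp2 : p = 2 := hqpar.mp hqe
      haveI : CharP L 2 := hp2 ▸ hLp
      haveI : ExpChar L 2 := hp2 ▸ hLe
      have h2 : ∀ x : L,
          Algebra.trace K L (x * x) = Algebra.trace K L x * Algebra.trace K L x := by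
        intro x
        apply (algebraMap K L).injective
        rw [map_mul (algebraMap K L), htr, htr]
        calc ∑ k ∈ Finset.range m, (x * x) ^ q ^ k
            = ∑ k ∈ Finset.range m, (x ^ q ^ k) ^ 2 := by
              refine Finset.sum_congr rfl fun k _ => ?_
              rw [mul_pow, sq]
          _ = (∑ k ∈ Finset.range m, x ^ q ^ k) ^ 2 := (sum_pow_char 2 (Finset.range m) (fun k => x ^ q ^ k)).symm
          _ = (∑ k ∈ Finset.range m, x ^ q ^ k) * (∑ k ∈ Finset.range m, x ^ q ^ k) := sq _
      have hnd0 := traceForm_nondegenerate K L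
      have hnd : ∀ x ∈ (⊤ : Submodule K L),
          (∀ y ∈ (⊤ : Submodule K L), Algebra.trace K L (x * y) = 0) → x = 0 := by
        intro x _ hx
        refine hnd0.1 x fun y => ?_
        rw [Algebra.traceForm_apply]
        exact hx y Submodule.mem_top
      have hex : m ≠ 0 → ∃ x ∈ (⊤ : Submodule K L), Algebra.trace K L x ≠ 0 := by
        intro _
        by_contra hno
        push_neg at hno
        refine one_ne_zero (hnd0.1 1 fun y => ?_)
        rw [Algebra.traceForm_apply, one_mul]
        exact hno y Submodule.mem_top
      obtain ⟨w, hwW, hworth⟩ :=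
        sl_char2_family h2 m ⊤ (by rw [finrank_top, hdim]) hnd hex
      exact sd_basis hm hdim w hworth
    · -- q odd, m odd
      have hqodd : Fintype.card K % 2 = 1 := by rw [hcard]; exact Nat.odd_iff.mp hqo
      have hp2 : p ≠ 2 := fun h => Nat.not_odd_iff_even.mpr (hqpar.mpr h) hqo
      have hm1even : Even (m - 1) := by
        obtain ⟨t, ht⟩ := hmo
        exact ⟨t, by omega⟩
      have hfix : δ ^ q = δ := by rw [hδq, hm1even.neg_one_pow, one_mul]
      obtain ⟨c, hc⟩ := sl_fixed q hcard hfix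
      have hdetc : Matrix.det G = c ^ 2 := by
        apply (algebraMap K L).injective
        rw [hδdet, map_pow, hc]
      haveI : Invertible (2 : K) := invertibleOfNonzero (by
        intro h
        have h2' : ((2 : ℕ) : K) = 0 := by exact_mod_cast h
        have hdvd := (CharP.cast_eq_zero_iff K p 2).mp h2'
        exact hp2 ((Nat.prime_dvd_prime_iff_eq hp Nat.prime_two).mp hdvd))
      obtain ⟨v0, hv0⟩ := LinearMap.BilinForm.exists_orthogonal_basis
        (B := Algebra.traceForm K L) (LinearMap.BilinForm.isSymm_iff.mp (Algebra.traceForm_isSymm (R := K) (S := L)))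
      set v : Basis (Fin m) K L := v0.reindex (finCongr hdim) with hv
      set d : Fin m → K := fun i => Algebra.trace K L (v i * v i) with hd
      have horthv : ∀ i j, i ≠ j → Algebra.trace K L (v i * v j) = 0 := by
        intro i j hij
        have hne : (finCongr hdim).symm i ≠ (finCongr hdim).symm j :=
          fun h => hij ((finCongr hdim).symm.injective h)
        have h := hv0 hne
        rw [Function.onFun, Algebra.traceForm_apply] at h
        rw [hv, Basis.reindex_apply, Basis.reindex_apply]
        exact h
      have hnd0 := traceForm_nondegenerate K L
      have hdne : ∀ i, d i ≠ 0 := by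
        intro i h0
        have hzero : v i = 0 := by
          refine hnd0.1 (v i) fun y => ?_
          rw [Algebra.traceForm_apply]
          have hy := Basis.sum_repr v y
          rw [← hy, Finset.mul_sum, map_sum]
          refine Finset.sum_eq_zero fun j _ => ?_
          rw [mul_smul_comm, _root_.map_smul, smul_eq_mul]
          rcases eq_or_ne i j with rfl | hij
          · rw [show Algebra.trace K L (v i * v i) = d i from rfl, h0, mul_zero]
          · rw [horthv i j hij, mul_zero]
        exact v.ne_zero i hzero
      obtain ⟨c2, hc2⟩ := sl_gram_det b ⇑v
      have hdiag : (Matrix.of fun i j => Algebra.trace K L (v i * v j))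
          = Matrix.diagonal d := by
        ext i j
        rcases eq_or_ne i j with rfl | hij
        · rw [Matrix.of_apply, Matrix.diagonal_apply_eq]
        · rw [Matrix.of_apply, Matrix.diagonal_apply_ne _ hij]
          exact horthv i j hij
      rw [hdiag, Matrix.det_diagonal] at hc2
      have hsq : IsSquare (∏ i, d i) := by
        rw [hc2, hdetc]
        exact ⟨c2 * c, by ring⟩
      obtain ⟨n, rfl⟩ : ∃ n, m = n + 1 := ⟨m - 1, by omega⟩
      obtain ⟨w, hwspan, hworth⟩ := sl_odd_family hqodd n v d (fun i => rfl) horthv hdne hsq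
      exact sd_basis hm hdim w hworth
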